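/- Fix λ ∈ (0,∞) and θ ∈ ℝ, and define Λ_max(t) = max_{0 ≤ a ≤ 1} Λ(a, θ+t, λ) for t ∈ ℝ. Then Λ_max is differentiable at t = 0 and dΛ_max/dt |_{t=0} = a*, where a* is the unique maximizer of a ↦ Λ(a,θ,λ) over [0,1]. -/

import Mathlib

noncomputable section

/-- `Λ(a, θ, λ)` (note `Real.log 0 = 0`, so `0 log 0 = 0` is automatic). -/
def Lam (a θ lam : ℝ) : ℝ :=
  θ * a - (1 - a) * Real.log (1 - a) - a / 3 * Real.log (a / 3) -
    2 / 3 * a - a / 3 * Real.log 6 + a * Real.log lam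

lemma lam_cont (θ lam : ℝ) : Continuous (fun a => Lam a θ lam) := by
  unfold Lam
  have e1 : Continuous (fun a : ℝ => (1 - a) * Real.log (1 - a)) :=
    Real.continuous_mul_log.comp (continuous_const.sub continuous_id)
  have e2 : Continuous (fun a : ℝ => a / 3 * Real.log (a / 3)) :=
    Real.continuous_mul_log.comp (continuous_id.div_const 3)
  exact (((((continuous_const.mul continuous_id).sub e1).sub e2).sub
      (continuous_const.mul continuous_id)).sub
      ((continuous_id.div_const 3).mul continuous_const)).add
      (continuous_id.mul continuous_const)

lemma lam_shift (a θ t lam : ℝ) : Lam a (θ + t) lam = Lam a θ lam + t * a := by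
  unfold Lam; ring

/-- Lemma 3.5: `Λ_max(t) = max_{a∈[0,1]} Λ(a, θ+t, λ)` is differentiable at
`t = 0` with derivative `a*`, the unique maximizer of `a ↦ Λ(a,θ,λ)` over `[0,1]`. -/
theorem stmt16 (lam θ : ℝ) (hlam : 0 < lam) (astar : ℝ)
    (h1 : astar ∈ Set.Icc (0 : ℝ) 1)
    (h2 : ∀ a ∈ Set.Icc (0 : ℝ) 1, Lam a θ lam ≤ Lam astar θ lam)
    (h3 : ∀ a ∈ Set.Icc (0 : ℝ) 1,
      (∀ b ∈ Set.Icc (0 : ℝ) 1, Lam b θ lam ≤ Lam a θ lam) → a = astar) :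
    HasDerivAt (fun t : ℝ => sSup ((fun a => Lam a (θ + t) lam) '' Set.Icc (0 : ℝ) 1))
      astar 0 := by
  set f : ℝ → ℝ := fun t : ℝ => sSup ((fun a => Lam a (θ + t) lam) '' Set.Icc (0 : ℝ) 1)
    with hf
  set f0 : ℝ := Lam astar θ lam with hf0
  have hcompact : IsCompact (Set.Icc (0:ℝ) 1) := isCompact_Icc
  have hne : (Set.Icc (0:ℝ) 1).Nonempty := ⟨0, by norm_num⟩
  -- existence of a maximizer realizing the sSup, for each t
  have hmax : ∀ t : ℝ, ∃ a ∈ Set.Icc (0:ℝ) 1,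
      (∀ b ∈ Set.Icc (0:ℝ) 1, Lam b (θ+t) lam ≤ Lam a (θ+t) lam) ∧
      f t = Lam a (θ+t) lam := by
    intro t
    obtain ⟨a, ha, hm⟩ := hcompact.exists_isMaxOn hne ((lam_cont (θ+t) lam).continuousOn)
    refine ⟨a, ha, fun b hb => hm hb, ?_⟩
    exact IsGreatest.csSup_eq ⟨⟨a, ha, rfl⟩, by rintro _ ⟨b, hb, rfl⟩; exact hm hb⟩
  have hfval0 : f 0 = f0 := by
    have : f 0 = sSup ((fun a => Lam a θ lam) '' Set.Icc (0:ℝ) 1) := by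
      simp [hf]
    rw [this]
    exact IsGreatest.csSup_eq ⟨⟨astar, h1, rfl⟩, by rintro _ ⟨b, hb, rfl⟩; exact h2 b hb⟩
  -- key: maximizers at small t are close to astar
  have key : ∀ ε : ℝ, 0 < ε → ∃ δ : ℝ, 0 < δ ∧ ∀ t : ℝ, |t| < δ →
      ∀ a ∈ Set.Icc (0:ℝ) 1, (∀ b ∈ Set.Icc (0:ℝ) 1, Lam b (θ+t) lam ≤ Lam a (θ+t) lam) →
      |a - astar| < ε := by
    intro ε hε
    set K : Set ℝ := Set.Icc (0:ℝ) 1 ∩ {a | ε ≤ |a - astar|} with hK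
    rcases K.eq_empty_or_nonempty with hKe | hKne
    · refine ⟨1, one_pos, fun t ht a ha hma => ?_⟩
      by_contra hc
      push_neg at hc
      have haK : a ∈ K := ⟨ha, hc⟩
      rw [hKe] at haK
      exact Set.notMem_empty a haK
    · have hKc : IsCompact K := by
        apply hcompact.inter_right
        have : {a : ℝ | ε ≤ |a - astar|} = (fun a => |a - astar|) ⁻¹' Set.Ici ε := rfl
        rw [this]
        exact isClosed_Ici.preimage ((continuous_id.sub continuous_const).abs)
      obtain ⟨a0, ha0, hm0⟩ := hKc.exists_isMaxOn hKne
        ((lam_cont θ lam).continuousOn)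
      have ha0I : a0 ∈ Set.Icc (0:ℝ) 1 := ha0.1
      have hM : Lam a0 θ lam < f0 := by
        rcases lt_or_eq_of_le (h2 a0 ha0I) with h | h
        · exact h
        · exfalso
          have heq : a0 = astar := h3 a0 ha0I (fun b hb => by rw [h]; exact h2 b hb)
          have h2' : ε ≤ |a0 - astar| := ha0.2
          rw [heq, sub_self, abs_zero] at h2'
          linarith
      refine ⟨(f0 - Lam a0 θ lam) / 2, by linarith, fun t ht a ha hma => ?_⟩
      by_contra hc
      push_neg at hc
      have haK : a ∈ K := ⟨ha, hc⟩
      have hb1 : Lam a (θ+t) lam ≤ Lam a0 θ lam + |t| := by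
        rw [lam_shift]
        have : t * a ≤ |t| := by
          calc t * a ≤ |t * a| := le_abs_self _
          _ = |t| * |a| := abs_mul t a
          _ ≤ |t| * 1 := by
              apply mul_le_mul_of_nonneg_left _ (abs_nonneg t)
              rw [abs_of_nonneg ha.1]; exact ha.2
          _ = |t| := mul_one _
        have h0 := hm0 haK
        simp only [Set.mem_setOf_eq] at h0
        linarith
      have hb2 : f0 - |t| ≤ Lam astar (θ+t) lam := by
        rw [lam_shift]
        have : -|t| ≤ t * astar := by
          calc (-|t| : ℝ) = -(|t| * 1) := by ring
          _ ≤ -(|t| * |astar|) := by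
              apply neg_le_neg
              apply mul_le_mul_of_nonneg_left _ (abs_nonneg t)
              rw [abs_of_nonneg h1.1]; exact h1.2
          _ = -|t * astar| := by rw [abs_mul]
          _ ≤ t * astar := neg_abs_le _
        linarith
      have := hma astar h1
      linarith
  -- conclude via the slope characterization
  rw [hasDerivAt_iff_tendsto_slope]
  rw [Metric.tendsto_nhdsWithin_nhds]
  intro ε hε
  obtain ⟨δ, hδ, hδ'⟩ := key ε hε
  refine ⟨δ, hδ, fun {t} htne htd => ?_⟩
  have ht0 : t ≠ 0 := by simpa using htne
  have htabs : |t| < δ := by simpa [Real.dist_eq] using htd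
  obtain ⟨at_, hat, hmat, hfeq⟩ := hmax t
  have hclose : |at_ - astar| < ε := hδ' t htabs at_ hat hmat
  -- bounds on f t - f 0
  have hlow : f 0 + t * astar ≤ f t := by
    have h' := hmat astar h1
    rw [lam_shift astar θ t lam, lam_shift at_ θ t lam] at h'
    rw [hfeq, hfval0, lam_shift]
    linarith
  have hup : f t ≤ f 0 + t * at_ := by
    rw [hfeq, hfval0, lam_shift]
    have := h2 at_ hat
    linarith
  have hkey : |f t - f 0 - t * astar| ≤ |t| * |at_ - astar| := by
    rw [abs_of_nonneg (by linarith)]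
    calc f t - f 0 - t * astar ≤ t * at_ - t * astar := by linarith
    _ = t * (at_ - astar) := by ring
    _ ≤ |t * (at_ - astar)| := le_abs_self _
    _ = |t| * |at_ - astar| := abs_mul _ _
  have htpos : 0 < |t| := abs_pos.mpr ht0
  rw [Real.dist_eq]
  have hslope : slope f 0 t - astar = (f t - f 0 - t * astar) / t := by
    rw [slope_def_field]
    field_simp
    ring
  rw [hslope, abs_div]
  rw [div_lt_iff₀ htpos]
  calc |f t - f 0 - t * astar| ≤ |t| * |at_ - astar| := hkey
  _ < |t| * ε := by exact (mul_lt_mul_iff_right₀ htpos).mpr hclose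
  _ = ε * |t| := mul_comm _ _

end
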